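/- Every finite idempotent semifield has exactly two elements: if K is an idempotent semifield and K is finite, then every a : K satisfies a = 0 or a = 1. (Hence F₁ = {0, 1} is the only finite quasi-field of characteristic 1.) -/

import Mathlib

theorem finite_idempotent_semifield_two_elements {K : Type*} [Semifield K] [Finite K]
    (hidem : ∀ a : K, a + a = a) :
    ∀ a : K, a = 0 ∨ a = 1 := by
  -- zerosumfree
  have hzsf : ∀ x y : K, x + y = 0 → x = 0 := by
    intro x y h
    have : x + (x + y) = x + y := by rw [← add_assoc, hidem]
    rw [h, add_zero] at this
    exact this
  intro a
  rcases eq_or_ne a 0 with ha | ha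
  · exact Or.inl ha
  · right
    set u : Kˣ := Units.mk0 a ha with hu
    have hn : a ^ orderOf u = 1 := by
      have := pow_orderOf_eq_one u
      have : ((u ^ orderOf u : Kˣ) : K) = ((1 : Kˣ) : K) := by rw [this]
      rw [Units.val_pow_eq_pow_val, Units.val_one] at this
      exact this
    set n := orderOf u with hndef
    have hnpos : 0 < n := orderOf_pos u
    set s : K := ∑ i ∈ Finset.range n, a ^ i with hs
    have hsne : s ≠ 0 := by
      intro h0
      have : s = a ^ 0 + ∑ i ∈ Finset.Ico 1 n, a ^ i := by
        rw [hs, Finset.range_eq_Ico, ← Finset.sum_eq_sum_Ico_succ_bot hnpos]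
      rw [this] at h0
      have : (a : K) ^ 0 = 0 := hzsf _ _ h0
      simp at this
    have key : a * s = s := by
      have h1 : a * s = ∑ i ∈ Finset.range n, a ^ (i + 1) := by
        rw [hs, Finset.mul_sum]
        exact Finset.sum_congr rfl fun i _ => by ring
      have h2 : ∑ i ∈ Finset.range n, a ^ (i + 1)
          = ∑ i ∈ Finset.range n, a ^ i := by
        rcases Nat.exists_eq_add_of_lt hnpos with ⟨m, hm⟩
        simp only [zero_add] at hm
        rw [hm] at hn ⊢
        rw [Finset.sum_range_succ, Finset.sum_range_succ' (fun i => a ^ i)]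
        rw [hn, pow_zero, add_comm]
      rw [h1, h2]
    have := mul_right_cancel₀ hsne (by rw [key, one_mul] : a * s = 1 * s)
    exact this
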